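/- Let I be a finite index set partitioned into blocks J⁽¹⁾,…,J⁽q⁾ and let Θ ∈ ℝ^{I×I} be symmetric positive definite. For 1 ≤ k ≤ q write Θ⁽ᵏ⁾ := Θ restricted to (J⁽¹⁾∪⋯∪J⁽ᵏ⁾)², A⁽ᵏ⁾ := (Θ⁽ᵏ⁾)⁻¹, B⁽ᵏ⁾ := A⁽ᵏ⁾_{k,k}. Let H ∈ (0,1) and C_Φ ≥ 1 be constants such that: λ_min(Θ⁽ᵏ⁾) ≥ H^{2k}/C_Φ for all 1 ≤ k ≤ q; λ_max(Θ_{l,l}) ≤ C_Φ for all 1 ≤ l ≤ q; and λ_max(Θ_{l,l} − Θ_{l,1:k} (Θ_{1:k,1:k})⁻¹ Θ_{1:k,l}) ≤ C_Φ H^{2k} for all 1 ≤ k < l ≤ q. Then for every 1 ≤ k ≤ q one has C_Φ⁻¹ H^{−2(k−1)} Id ≼ B⁽ᵏ⁾ ≼ C_Φ H^{−2k} Id (in the Loewner order), and consequently the condition number of B⁽ᵏ⁾ satisfies cond(B⁽ᵏ⁾) := λ_max(B⁽ᵏ⁾)/λ_min(B⁽ᵏ⁾) ≤ κ := H^{−2}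 C_Φ². -/

import Mathlib

open Matrix

namespace LoewnerAux

set_option linter.unusedSectionVars false
set_option linter.unusedVariables false

section ext
variable {m m' n : Type*} [Fintype m] [Fintype m'] [Fintype n] [DecidableEq n]

/-- Extension of a vector by zero along a map `f`. -/
noncomputable def extz (f : m → n) (x : m → ℝ) : n → ℝ :=
  fun j => ∑ i, if f i = j then x i else 0

lemma sum_mul_extz (f : m → n) (x : m → ℝ) (h : n → ℝ) :
    ∑ j, h j * extz f x j = ∑ i, h (f i) * x i := by
  unfold extz
  simp_rw [Finset.mul_sum, mul_ite, mul_zero]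
  rw [Finset.sum_comm]
  refine Finset.sum_congr rfl fun i _ => ?_
  simp [Finset.sum_ite_eq]

lemma sum_extz_mul (f : m → n) (x : m → ℝ) (h : n → ℝ) :
    ∑ j, extz f x j * h j = ∑ i, x i * h (f i) := by
  simp_rw [mul_comm]
  simp_rw [mul_comm (x _)]
  exact sum_mul_extz f x h

lemma extz_apply {f : m → n} (hf : Function.Injective f) (x : m → ℝ) (i : m) :
    extz f x (f i) = x i := by
  unfold extz
  rw [Finset.sum_eq_single i (fun i' _ hne => if_neg (fun h => hne (hf h)))
    (fun h => absurd (Finset.mem_univ i) h)]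
  simp

lemma extz_eq_zero {f : m → n} (x : m → ℝ) {j : n} (hj : ∀ i, f i ≠ j) :
    extz f x j = 0 := by
  unfold extz
  exact Finset.sum_eq_zero fun i _ => if_neg (hj i)

lemma extz_ne_zero {f : m → n} (hf : Function.Injective f) {x : m → ℝ} (hx : x ≠ 0) :
    extz f x ≠ 0 := by
  obtain ⟨i, hi⟩ := Function.ne_iff.mp hx
  intro h
  exact hi (by simpa [extz_apply hf] using congrFun h (f i))

lemma dot_extz_extz (A : Matrix n n ℝ) (f : m → n) (g : m' → n) (x : m → ℝ) (w : m' → ℝ) :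
    extz f x ⬝ᵥ (A *ᵥ extz g w) = x ⬝ᵥ (A.submatrix f g *ᵥ w) := by
  rw [dotProduct, sum_extz_mul]
  refine Finset.sum_congr rfl fun i _ => ?_
  rw [mulVec, dotProduct, sum_mul_extz]
  rfl

lemma extz_dot_extz (f : m → n) (hf : Function.Injective f) (x : m → ℝ) :
    extz f x ⬝ᵥ extz f x = x ⬝ᵥ x := by
  rw [dotProduct, sum_extz_mul]
  refine Finset.sum_congr rfl fun i _ => ?_
  rw [extz_apply hf]

end ext

section quad
variable {n : Type*} [Fintype n] [DecidableEq n]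

lemma dot_self_nonneg (x : n → ℝ) : 0 ≤ x ⬝ᵥ x :=
  Finset.sum_nonneg fun i _ => mul_self_nonneg _

lemma dot_eq_sum_sq (x : n → ℝ) : x ⬝ᵥ x = ∑ i, x i ^ 2 := by
  simp [dotProduct, sq]

lemma dot_mulVec_symm {M : Matrix n n ℝ} (hM : M.IsHermitian) (u v : n → ℝ) :
    u ⬝ᵥ (M *ᵥ v) = v ⬝ᵥ (M *ᵥ u) := by
  simp only [dotProduct, mulVec, Finset.mul_sum]
  rw [Finset.sum_comm]
  refine Finset.sum_congr rfl fun j _ => Finset.sum_congr rfl fun i _ => ?_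
  have h := hM.apply i j
  simp only [star_trivial] at h
  rw [h]
  ring

lemma psd_quad_nonneg {M : Matrix n n ℝ} (hM : M.PosSemidef) (u : n → ℝ) :
    0 ≤ u ⬝ᵥ (M *ᵥ u) := by
  simpa using hM.dotProduct_mulVec_nonneg u

lemma pd_quad_pos {M : Matrix n n ℝ} (hM : M.PosDef) {u : n → ℝ} (hu : u ≠ 0) :
    0 < u ⬝ᵥ (M *ᵥ u) := by
  simpa using hM.dotProduct_mulVec_pos hu

lemma psd_cauchy {M : Matrix n n ℝ} (hM : M.PosSemidef) (u v : n → ℝ) :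
    (u ⬝ᵥ (M *ᵥ v))^2 ≤ (u ⬝ᵥ (M *ᵥ u)) * (v ⬝ᵥ (M *ᵥ v)) := by
  set puu := u ⬝ᵥ (M *ᵥ u) with hpuu
  set puv := u ⬝ᵥ (M *ᵥ v) with hpuv
  set pvv := v ⬝ᵥ (M *ᵥ v) with hpvv
  have key : ∀ a b : ℝ, 0 ≤ a^2*puu + 2*(a*b)*puv + b^2*pvv := by
    intro a b
    have h := psd_quad_nonneg hM (a • u + b • v)
    have expand : (a • u + b • v) ⬝ᵥ (M *ᵥ (a • u + b • v)) =
        a^2*puu + 2*(a*b)*puv + b^2*pvv := by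
      have hsym := dot_mulVec_symm hM.1 v u
      simp only [mulVec_add, mulVec_smul, dotProduct_add, add_dotProduct,
        dotProduct_smul, smul_dotProduct, smul_eq_mul, hpuu, hpuv, hpvv]
      rw [hsym]
      ring
    linarith [expand ▸ h]
  have hpuu0 : 0 ≤ puu := by simpa using key 1 0
  have hpvv0 : 0 ≤ pvv := by simpa using key 0 1
  rcases eq_or_lt_of_le hpvv0 with h0 | hpos
  · have hpuv0 : puv = 0 := by
      by_contra hne
      have h := key 1 (-(puu+1)/(2*puv))
      rw [← h0] at h
      have h2 : 2*(1*(-(puu+1)/(2*puv)))*puv = -(puu+1) := by field_simp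
      nlinarith
    rw [hpuv0, ← h0]
    norm_num
  · nlinarith [key pvv (-puv)]

lemma mulVec_inv_cancel {M : Matrix n n ℝ} (hM : M.PosDef) (x : n → ℝ) :
    M *ᵥ (M⁻¹ *ᵥ x) = x := by
  rw [mulVec_mulVec, Matrix.mul_nonsing_inv _ hM.det_pos.ne'.isUnit, one_mulVec]

/-- Cauchy–Schwarz-type lower bound for quadratic forms of the inverse. -/
lemma inv_quad_cauchy {M : Matrix n n ℝ} (hM : M.PosDef) (x y : n → ℝ) :
    (x ⬝ᵥ y)^2 ≤ (x ⬝ᵥ (M⁻¹ *ᵥ x)) * (y ⬝ᵥ (M *ᵥ y)) := by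
  set u := M⁻¹ *ᵥ x with hu
  have h1 : M *ᵥ u = x := mulVec_inv_cancel hM x
  have h2 : u ⬝ᵥ (M *ᵥ y) = x ⬝ᵥ y := by
    rw [dot_mulVec_symm hM.1 u y, h1, dotProduct_comm]
  have h3 : u ⬝ᵥ (M *ᵥ u) = x ⬝ᵥ (M⁻¹ *ᵥ x) := by
    rw [h1, dotProduct_comm]
  calc (x ⬝ᵥ y)^2 = (u ⬝ᵥ (M *ᵥ y))^2 := by rw [h2]
    _ ≤ (u ⬝ᵥ (M *ᵥ u)) * (y ⬝ᵥ (M *ᵥ y)) := psd_cauchy hM.posSemidef u y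
    _ = (x ⬝ᵥ (M⁻¹ *ᵥ x)) * (y ⬝ᵥ (M *ᵥ y)) := by rw [h3]

/-- Upper bound on the quadratic form of the inverse from a Loewner lower bound. -/
lemma inv_quad_upper {M : Matrix n n ℝ} (hM : M.PosDef) {c : ℝ} (hc : 0 < c)
    (hlow : (M - c • 1).PosSemidef) (x : n → ℝ) :
    x ⬝ᵥ (M⁻¹ *ᵥ x) ≤ c⁻¹ * (x ⬝ᵥ x) := by
  set u := M⁻¹ *ᵥ x with hu
  have h1 : M *ᵥ u = x := mulVec_inv_cancel hM x
  have ht : u ⬝ᵥ (M *ᵥ u) = x ⬝ᵥ (M⁻¹ *ᵥ x) := by rw [h1, dotProduct_comm]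
  have hlow' := psd_quad_nonneg hlow u
  have hexp : u ⬝ᵥ ((M - c • 1) *ᵥ u) = u ⬝ᵥ (M *ᵥ u) - c * (u ⬝ᵥ u) := by
    simp [sub_mulVec, smul_mulVec, one_mulVec, dotProduct_sub, dotProduct_smul,
      smul_eq_mul]
  rw [hexp] at hlow'
  have hcs : (u ⬝ᵥ x)^2 ≤ (u ⬝ᵥ u) * (x ⬝ᵥ x) := by
    have := psd_cauchy (M := (1 : Matrix n n ℝ)) Matrix.PosSemidef.one u x
    simpa [one_mulVec] using this
  have hux : u ⬝ᵥ x = u ⬝ᵥ (M *ᵥ u) := by rw [h1]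
  rw [hux] at hcs
  set t := u ⬝ᵥ (M *ᵥ u) with hT
  have huu : 0 ≤ u ⬝ᵥ u := dot_self_nonneg u
  have hxx : 0 ≤ x ⬝ᵥ x := dot_self_nonneg x
  rw [← ht]
  rcases le_or_gt t 0 with h | h
  · calc t ≤ 0 := h
      _ ≤ c⁻¹ * (x ⬝ᵥ x) := by positivity
  · have hct : c * t ≤ x ⬝ᵥ x := by nlinarith
    rw [← le_inv_mul_iff₀ hc] at hct
    exact hct

lemma quad_smul_one_sub (c : ℝ) (B : Matrix n n ℝ) (x : n → ℝ) :
    x ⬝ᵥ ((c • (1 : Matrix n n ℝ) - B) *ᵥ x) = c * (x ⬝ᵥ x) - x ⬝ᵥ (B *ᵥ x) := by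
  simp [sub_mulVec, smul_mulVec, one_mulVec, dotProduct_sub, dotProduct_smul,
    smul_eq_mul]

lemma quad_sub_smul_one (c : ℝ) (B : Matrix n n ℝ) (x : n → ℝ) :
    x ⬝ᵥ ((B - c • (1 : Matrix n n ℝ)) *ᵥ x) = x ⬝ᵥ (B *ᵥ x) - c * (x ⬝ᵥ x) := by
  simp [sub_mulVec, smul_mulVec, one_mulVec, dotProduct_sub, dotProduct_smul,
    smul_eq_mul]

lemma smul_one_isHermitian (c : ℝ) : (c • (1 : Matrix n n ℝ)).IsHermitian := by
  simp [Matrix.IsHermitian]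

end quad

end LoewnerAux


variable {N q : ℕ}

/-- `Θ⁽ᵏ⁾`: the restriction of `Θ` to `I⁽ᵏ⁾ = J⁽¹⁾ ∪ ⋯ ∪ J⁽ᵏ⁾`, the blocks being
the level sets of `b : Fin N → Fin q`. -/
noncomputable def thetaK (b : Fin N → Fin q) (Θ : Matrix (Fin N) (Fin N) ℝ) (k : Fin q) :
    Matrix {i : Fin N // b i ≤ k} {i : Fin N // b i ≤ k} ℝ :=
  Θ.submatrix Subtype.val Subtype.val

/-- `A⁽ᵏ⁾ := (Θ⁽ᵏ⁾)⁻¹`. -/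
noncomputable def AK (b : Fin N → Fin q) (Θ : Matrix (Fin N) (Fin N) ℝ) (k : Fin q) :
    Matrix {i : Fin N // b i ≤ k} {i : Fin N // b i ≤ k} ℝ :=
  (thetaK b Θ k)⁻¹

/-- `B⁽ᵏ⁾ := A⁽ᵏ⁾_{k,k}`, the `(k,k)` block of `A⁽ᵏ⁾`. -/
noncomputable def BK (b : Fin N → Fin q) (Θ : Matrix (Fin N) (Fin N) ℝ) (k : Fin q) :
    Matrix {i : Fin N // b i = k} {i : Fin N // b i = k} ℝ :=
  fun i j => AK b Θ k ⟨i.1, i.2.le⟩ ⟨j.1, j.2.le⟩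

/-- The Schur complement `Θ_{l,l} − Θ_{l,1:k} (Θ_{1:k,1:k})⁻¹ Θ_{1:k,l}`. -/
noncomputable def schurLK (b : Fin N → Fin q) (Θ : Matrix (Fin N) (Fin N) ℝ) (k l : Fin q) :
    Matrix {i : Fin N // b i = l} {i : Fin N // b i = l} ℝ :=
  Θ.submatrix Subtype.val Subtype.val -
    Θ.submatrix (Subtype.val : {i : Fin N // b i = l} → Fin N)
        (Subtype.val : {i : Fin N // b i ≤ k} → Fin N) *
      (thetaK b Θ k)⁻¹ *
      Θ.submatrix (Subtype.val : {i : Fin N // b i ≤ k} → Fin N)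
        (Subtype.val : {i : Fin N // b i = l} → Fin N)

lemma thetaK_posDef (b : Fin N → Fin q) {Θ : Matrix (Fin N) (Fin N) ℝ}
    (hΘ : Θ.PosDef) (k : Fin q) : (thetaK b Θ k).PosDef := by
  refine Matrix.PosDef.of_dotProduct_mulVec_pos (hΘ.1.submatrix _) fun x hx => ?_
  have hval : Function.Injective (Subtype.val : {i : Fin N // b i ≤ k} → Fin N) :=
    Subtype.val_injective
  have h := hΘ.dotProduct_mulVec_pos (x := LoewnerAux.extz Subtype.val x) (LoewnerAux.extz_ne_zero hval hx)
  simp only [star_trivial] at h ⊢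
  rw [LoewnerAux.dot_extz_extz] at h
  exact h


set_option maxHeartbeats 1000000 in
/-- Loewner bounds `C_Φ⁻¹ H^{−2(k−1)} Id ≼ B⁽ᵏ⁾ ≼ C_Φ H^{−2k} Id`
and the condition-number bound `cond(B⁽ᵏ⁾) ≤ κ := H⁻² C_Φ²`.
(Here `k : Fin q` is the `0`-based version of the `1`-based level `k+1`.) -/
theorem loewner_bounds_BK
    (b : Fin N → Fin q) (hb : Monotone b)
    (Θ : Matrix (Fin N) (Fin N) ℝ) (hΘ : Θ.PosDef)
    (H CΦ : ℝ) (hH : H ∈ Set.Ioo (0 : ℝ) 1) (hCΦ : 1 ≤ CΦ)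
    (h_min : ∀ k : Fin q,
      (thetaK b Θ k - (H ^ (2 * ((k : ℕ) + 1)) / CΦ) • 1).PosSemidef)
    (h_diag : ∀ l : Fin q,
      (CΦ • (1 : Matrix {i : Fin N // b i = l} {i : Fin N // b i = l} ℝ) -
        Θ.submatrix Subtype.val Subtype.val).PosSemidef)
    (h_schur : ∀ k l : Fin q, k < l →
      ((CΦ * H ^ (2 * ((k : ℕ) + 1))) • 1 - schurLK b Θ k l).PosSemidef) :
    ∀ k : Fin q,
      (BK b Θ k - (CΦ⁻¹ * (H ^ (2 * (k : ℕ)))⁻¹) • 1).PosSemidef ∧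
      ((CΦ * (H ^ (2 * ((k : ℕ) + 1)))⁻¹) • 1 - BK b Θ k).PosSemidef ∧
      (∀ x y : {i : Fin N // b i = k} → ℝ,
        (∑ i, x i ^ 2) = 1 → (∑ i, y i ^ 2) = 1 →
        x ⬝ᵥ (BK b Θ k *ᵥ x) ≤ (H ^ 2)⁻¹ * CΦ ^ 2 * (y ⬝ᵥ (BK b Θ k *ᵥ y))) := by
  obtain ⟨hH0, hH1⟩ := hH
  have hCΦ0 : (0:ℝ) < CΦ := lt_of_lt_of_le one_pos hCΦ
  intro k
  set M := thetaK b Θ k with hMdef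
  have hMpd : M.PosDef := thetaK_posDef b hΘ k
  set f : {i : Fin N // b i = k} → {i : Fin N // b i ≤ k} := fun i => ⟨i.1, i.2.le⟩ with hf
  have hfinj : Function.Injective f := by
    intro i j h
    have : (f i).1 = (f j).1 := congrArg Subtype.val h
    exact Subtype.ext this
  have hBsub : BK b Θ k = (M⁻¹).submatrix f f := rfl
  have hquadB : ∀ x : {i : Fin N // b i = k} → ℝ,
      x ⬝ᵥ (BK b Θ k *ᵥ x) =
        LoewnerAux.extz f x ⬝ᵥ (M⁻¹ *ᵥ LoewnerAux.extz f x) := fun x => by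
    rw [LoewnerAux.dot_extz_extz, ← hBsub]
  have hBherm : (BK b Θ k).IsHermitian := by
    rw [hBsub]; exact hMpd.inv.1.submatrix f
  -- Upper bound on the quadratic form of BK
  have hupper : ∀ x : {i : Fin N // b i = k} → ℝ,
      x ⬝ᵥ (BK b Θ k *ᵥ x) ≤ (CΦ * (H ^ (2 * ((k : ℕ) + 1)))⁻¹) * (x ⬝ᵥ x) := by
    intro x
    have hc : (0:ℝ) < H ^ (2 * ((k : ℕ) + 1)) / CΦ := by positivity
    have h := LoewnerAux.inv_quad_upper hMpd hc (h_min k) (LoewnerAux.extz f x)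
    rw [LoewnerAux.extz_dot_extz f hfinj] at h
    rw [hquadB x]
    calc LoewnerAux.extz f x ⬝ᵥ (M⁻¹ *ᵥ LoewnerAux.extz f x)
        ≤ (H ^ (2 * ((k : ℕ) + 1)) / CΦ)⁻¹ * (x ⬝ᵥ x) := h
      _ = (CΦ * (H ^ (2 * ((k : ℕ) + 1)))⁻¹) * (x ⬝ᵥ x) := by
          rw [div_eq_mul_inv, mul_inv, inv_inv, mul_comm (H ^ (2 * ((k : ℕ) + 1)))⁻¹]
  -- Positivity of the quadratic form of BK
  have hBnonneg : ∀ x : {i : Fin N // b i = k} → ℝ, 0 ≤ x ⬝ᵥ (BK b Θ k *ᵥ x) := by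
    intro x
    rw [hquadB x]
    exact LoewnerAux.psd_quad_nonneg hMpd.inv.posSemidef _
  -- Lower bound on the quadratic form of BK, via the Schur complement
  have hlower : ∀ x : {i : Fin N // b i = k} → ℝ,
      (CΦ⁻¹ * (H ^ (2 * (k : ℕ)))⁻¹) * (x ⬝ᵥ x) ≤ x ⬝ᵥ (BK b Θ k *ᵥ x) := by
    intro x
    -- find a test vector y with `extz f x ⬝ᵥ y = x ⬝ᵥ x` and a bound on `y ⬝ᵥ M y`
    have hS : ∃ y : {i : Fin N // b i ≤ k} → ℝ,
        LoewnerAux.extz f x ⬝ᵥ y = x ⬝ᵥ x ∧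
        y ⬝ᵥ (M *ᵥ y) ≤ (CΦ * H ^ (2 * (k : ℕ))) * (x ⬝ᵥ x) := by
      rcases Nat.eq_zero_or_pos (k : ℕ) with hk0 | hkpos
      · -- first block: use y = extz f x and h_diag
        refine ⟨LoewnerAux.extz f x, LoewnerAux.extz_dot_extz f hfinj x, ?_⟩
        have he : LoewnerAux.extz f x ⬝ᵥ (M *ᵥ LoewnerAux.extz f x) =
            x ⬝ᵥ ((Θ.submatrix Subtype.val Subtype.val :
              Matrix {i : Fin N // b i = k} {i : Fin N // b i = k} ℝ) *ᵥ x) := by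
          rw [LoewnerAux.dot_extz_extz]
          rfl
        have hd := LoewnerAux.psd_quad_nonneg (h_diag k) x
        rw [LoewnerAux.quad_smul_one_sub] at hd
        rw [he, hk0]
        simpa using hd
      · -- later blocks: use the Schur complement w.r.t. level k' = k - 1
        set k' : Fin q := ⟨(k : ℕ) - 1, lt_trans (by omega) k.isLt⟩ with hk'
        have hk'k : k' < k := by
          rw [Fin.lt_def]
          simp only [hk']
          omega
        have hk'succ : (k' : ℕ) + 1 = (k : ℕ) := by
          simp only [hk']
          omega
        set M' := thetaK b Θ k' with hM'def
        have hM'pd : M'.PosDef := thetaK_posDef b hΘ k'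
        set g : {i : Fin N // b i ≤ k'} → {i : Fin N // b i ≤ k} :=
          fun j => ⟨j.1, le_trans j.2 hk'k.le⟩ with hg
        set C : Matrix {i : Fin N // b i ≤ k'} {i : Fin N // b i = k} ℝ :=
          Θ.submatrix Subtype.val Subtype.val with hC
        set C' : Matrix {i : Fin N // b i = k} {i : Fin N // b i ≤ k'} ℝ :=
          Θ.submatrix Subtype.val Subtype.val with hC'
        set w : {i : Fin N // b i ≤ k'} → ℝ := M'⁻¹ *ᵥ (C *ᵥ x) with hw
        refine ⟨LoewnerAux.extz f x - LoewnerAux.extz g w, ?_, ?_⟩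
        · -- the cross terms vanish
          rw [dotProduct_sub, LoewnerAux.extz_dot_extz f hfinj]
          have hzero : LoewnerAux.extz f x ⬝ᵥ LoewnerAux.extz g w = 0 := by
            refine Finset.sum_eq_zero fun j _ => ?_
            by_cases hbj : b j.1 = k
            · have : LoewnerAux.extz g w j = 0 := by
                refine LoewnerAux.extz_eq_zero w fun i hij => ?_
                have hji : j.1 = i.1 := (congrArg Subtype.val hij).symm
                have : b j.1 ≤ k' := hji ▸ i.2
                rw [hbj] at this
                exact absurd this (not_le_of_gt hk'k)
              rw [this, mul_zero]
            · have : LoewnerAux.extz f x j = 0 := by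
                refine LoewnerAux.extz_eq_zero x fun i hij => ?_
                have hji : j.1 = i.1 := (congrArg Subtype.val hij).symm
                exact hbj (hji ▸ i.2)
              rw [this, zero_mul]
          rw [hzero, sub_zero]
        · -- the quadratic form equals that of the Schur complement
          have hMff : M.submatrix f f =
              (Θ.submatrix Subtype.val Subtype.val :
                Matrix {i : Fin N // b i = k} {i : Fin N // b i = k} ℝ) := rfl
          have hMfg : M.submatrix f g = C' := rfl
          have hMgf : M.submatrix g f = C := rfl
          have hMgg : M.submatrix g g = M' := rfl
          have hM'w : M' *ᵥ w = C *ᵥ x := LoewnerAux.mulVec_inv_cancel hM'pd _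
          have e1 := LoewnerAux.dot_extz_extz M f f x x
          have e2 := LoewnerAux.dot_extz_extz M f g x w
          have e3 := LoewnerAux.dot_extz_extz M g f w x
          have e4 := LoewnerAux.dot_extz_extz M g g w w
          rw [hMff] at e1
          rw [hMfg] at e2
          rw [hMgf] at e3
          rw [hMgg] at e4
          have hexp : (LoewnerAux.extz f x - LoewnerAux.extz g w) ⬝ᵥ
              (M *ᵥ (LoewnerAux.extz f x - LoewnerAux.extz g w)) =
              x ⬝ᵥ (schurLK b Θ k' k *ᵥ x) := by
            have e4' : LoewnerAux.extz g w ⬝ᵥ (M *ᵥ LoewnerAux.extz g w) =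
                w ⬝ᵥ (C *ᵥ x) := by rw [e4, hM'w]
            have e2' : x ⬝ᵥ (C' *ᵥ w) = x ⬝ᵥ ((C' * M'⁻¹ * C) *ᵥ x) := by
              rw [hw]
              simp only [mulVec_mulVec, Matrix.mul_assoc]
            have hschur_eq : schurLK b Θ k' k =
                (Θ.submatrix Subtype.val Subtype.val :
                  Matrix {i : Fin N // b i = k} {i : Fin N // b i = k} ℝ) -
                  C' * M'⁻¹ * C := rfl
            rw [mulVec_sub, dotProduct_sub, sub_dotProduct, sub_dotProduct,
              e1, e2, e3, e4', e2', hschur_eq, sub_mulVec, dotProduct_sub]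
            ring
          rw [hexp]
          have hs := LoewnerAux.psd_quad_nonneg (h_schur k' k hk'k) x
          rw [LoewnerAux.quad_smul_one_sub, hk'succ] at hs
          linarith
    obtain ⟨y, hy1, hy2⟩ := hS
    have hcs := LoewnerAux.inv_quad_cauchy hMpd (LoewnerAux.extz f x) y
    rw [hy1, ← hquadB x] at hcs
    have hQ := hBnonneg x
    set p := x ⬝ᵥ x with hp
    set Q := x ⬝ᵥ (BK b Θ k *ᵥ x) with hQdef
    have hpnn : 0 ≤ p := LoewnerAux.dot_self_nonneg x
    have hd : (0:ℝ) < CΦ * H ^ (2 * (k : ℕ)) := by positivity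
    rcases eq_or_lt_of_le hpnn with h0 | hppos
    · rw [← h0, mul_zero]
      exact hQ
    · have h1 : p^2 ≤ Q * ((CΦ * H ^ (2 * (k : ℕ))) * p) :=
        le_trans hcs (mul_le_mul_of_nonneg_left hy2 hQ)
      have h2 : p ≤ (CΦ * H ^ (2 * (k : ℕ))) * Q := by nlinarith
      rw [← mul_inv]
      rw [inv_mul_le_iff₀ hd]
      linarith [h2]
  -- assemble the three statements
  refine ⟨Matrix.PosSemidef.of_dotProduct_mulVec_nonneg (hBherm.sub (LoewnerAux.smul_one_isHermitian _)) fun x => ?_,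
    Matrix.PosSemidef.of_dotProduct_mulVec_nonneg ((LoewnerAux.smul_one_isHermitian _).sub hBherm) fun x => ?_, fun x y hx hy => ?_⟩
  · simp only [star_trivial]
    rw [LoewnerAux.quad_sub_smul_one]
    linarith [hlower x]
  · simp only [star_trivial]
    rw [LoewnerAux.quad_smul_one_sub]
    linarith [hupper x]
  · have hxd : x ⬝ᵥ x = 1 := by rw [LoewnerAux.dot_eq_sum_sq, hx]
    have hyd : y ⬝ᵥ y = 1 := by rw [LoewnerAux.dot_eq_sum_sq, hy]
    have h1 := hupper x
    have h2 := hlower y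
    rw [hxd, mul_one] at h1
    rw [hyd, mul_one] at h2
    have hkey : (H ^ 2)⁻¹ * CΦ ^ 2 * (CΦ⁻¹ * (H ^ (2 * (k : ℕ)))⁻¹) =
        CΦ * (H ^ (2 * ((k : ℕ) + 1)))⁻¹ := by
      have hHne : H ≠ 0 := ne_of_gt hH0
      have hCne : CΦ ≠ 0 := ne_of_gt hCΦ0
      have hpow : H ^ (2 * ((k : ℕ) + 1)) = H ^ (2 * (k : ℕ)) * H ^ 2 := by
        rw [← pow_add]
        ring_nf
      rw [hpow, mul_inv]
      field_simp
    have hmono : (H ^ 2)⁻¹ * CΦ ^ 2 * (CΦ⁻¹ * (H ^ (2 * (k : ℕ)))⁻¹) ≤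
        (H ^ 2)⁻¹ * CΦ ^ 2 * (y ⬝ᵥ (BK b Θ k *ᵥ y)) := by
      have hnn : (0:ℝ) ≤ (H ^ 2)⁻¹ * CΦ ^ 2 := by positivity
      exact mul_le_mul_of_nonneg_left h2 hnn
    calc x ⬝ᵥ (BK b Θ k *ᵥ x) ≤ CΦ * (H ^ (2 * ((k : ℕ) + 1)))⁻¹ := h1
      _ = (H ^ 2)⁻¹ * CΦ ^ 2 * (CΦ⁻¹ * (H ^ (2 * (k : ℕ)))⁻¹) := hkey.symm
      _ ≤ (H ^ 2)⁻¹ * CΦ ^ 2 * (y ⬝ᵥ (BK b Θ k *ᵥ y)) := hmono
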